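/- Let λ_u > 0, B_f > 0, M > 0, K > 0, and 0 < X_min ≤ X_max be real numbers, and let B_o : ℝ → ℝ be a function that is positive and antitone (monotone nonincreasing) on the interval [X_min, X_max]. Define C(x) = (1 − e^{−λ_u x})/(λ_u x) and D(x) = (λ_u x + e^{−λ_u x} − 1)/(λ_u x)². If (B_f · C(X_min))/(B_o(X_max) · D(X_min)) ≤ M/K, then for every x ∈ [X_min, X_max] one has (B_f · C(x))/(B_o(x) · D(x)) ≤ M/K. -/

import Mathlib

open Real

private lemma key_ineq {t : ℝ} (ht : 0 < t) : t * exp (-(t/2)) ≤ 1 - exp (-t) := by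
  have h : t / 2 < Real.sinh (t / 2) := Real.self_lt_sinh_iff.mpr (by positivity)
  rw [Real.sinh_eq] at h
  have hv : (0:ℝ) < exp (-(t/2)) := exp_pos _
  have h2 : t ≤ exp (t/2) - exp (-(t/2)) := by linarith
  have h3 := mul_le_mul_of_nonneg_right h2 hv.le
  have e1 : exp (t/2) * exp (-(t/2)) = 1 := by rw [← exp_add]; norm_num
  have e2 : exp (-(t/2)) * exp (-(t/2)) = exp (-t) := by rw [← exp_add]; ring_nf
  nlinarith [h3]

private lemma F_pos {t : ℝ} (ht : 0 < t) : 0 < t + exp (-t) - 1 := by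
  have := Real.add_one_lt_exp (show -t ≠ 0 by linarith)
  linarith

private lemma E_lt_one {t : ℝ} (ht : 0 < t) : exp (-t) < 1 :=
  exp_lt_one_iff.mpr (by linarith)

noncomputable def Rfun (t : ℝ) : ℝ := t * (1 - exp (-t)) / (t + exp (-t) - 1)

private lemma hasDerivR {t : ℝ} (ht : 0 < t) :
    HasDerivAt Rfun
      (((1 - exp (-t) + t * exp (-t)) * (t + exp (-t) - 1)
        - t * (1 - exp (-t)) * (1 - exp (-t))) / (t + exp (-t) - 1) ^ 2) t := by
  have hexp : HasDerivAt (fun s : ℝ => exp (-s)) (-exp (-t)) t := by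
    have h := (Real.hasDerivAt_exp (-t)).comp t (hasDerivAt_neg t)
    exact h.congr_deriv (by ring)
  have hN : HasDerivAt (fun s : ℝ => s * (1 - exp (-s)))
      (1 - exp (-t) + t * exp (-t)) t := by
    have := (hasDerivAt_id t).mul ((hasDerivAt_const t (1:ℝ)).sub hexp)
    exact this.congr_deriv (by simp only [id_eq, Pi.sub_apply]; ring)
  have hF : HasDerivAt (fun s : ℝ => s + exp (-s) - 1) (1 - exp (-t)) t := by
    have := ((hasDerivAt_id t).add hexp).sub_const 1
    exact this.congr_deriv (by ring)
  have := hN.div hF (F_pos ht).ne'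
  exact this

private lemma R_anti : AntitoneOn Rfun (Set.Ioi 0) := by
  have hint : interior (Set.Ioi (0:ℝ)) = Set.Ioi 0 := interior_Ioi
  have hdiff : DifferentiableOn ℝ Rfun (interior (Set.Ioi (0:ℝ))) := by
    rw [hint]
    intro t ht
    exact (hasDerivR ht).differentiableAt.differentiableWithinAt
  apply antitoneOn_of_deriv_nonpos (convex_Ioi 0)
  · exact fun t ht => (hasDerivR ht).differentiableAt.continuousAt.continuousWithinAt
  · exact hdiff
  · rw [hint]
    intro t ht
    rw [(hasDerivR ht).deriv]
    apply div_nonpos_of_nonpos_of_nonneg _ (sq_nonneg _)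
    have hv : (0:ℝ) < exp (-(t/2)) := exp_pos _
    have hu : exp (-t) = exp (-(t/2)) ^ 2 := by rw [sq, ← exp_add]; ring_nf
    have hkey := key_ineq ht
    rw [hu] at hkey ⊢
    have htv : 0 ≤ t * exp (-(t/2)) := mul_nonneg (Set.mem_Ioi.mp ht).le hv.le
    have hprod : (t * exp (-(t/2)) - (1 - exp (-(t/2)) ^ 2)) *
        (t * exp (-(t/2)) + (1 - exp (-(t/2)) ^ 2)) ≤ 0 :=
      mul_nonpos_of_nonpos_of_nonneg (by linarith) (by linarith)
    nlinarith [hprod]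

/-- Proposition 3: if `B_f·C(X_min)/(B_o(X_max)·D(X_min)) ≤ M/K`, where
`C(x) = (1 − e^{−λ_u x})/(λ_u x)` and `D(x) = (λ_u x + e^{−λ_u x} − 1)/(λ_u x)²`,
and `B_o` is positive and antitone on `[X_min, X_max]`, then
`B_f·C(x)/(B_o(x)·D(x)) ≤ M/K` for all `x ∈ [X_min, X_max]`. -/
theorem stmt_11 (lam_u B_f M K Xmin Xmax : ℝ) (B_o : ℝ → ℝ)
    (hlu : 0 < lam_u) (hBf : 0 < B_f) (hM : 0 < M) (hK : 0 < K)
    (hXmin : 0 < Xmin) (hXle : Xmin ≤ Xmax)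
    (hBo_pos : ∀ x ∈ Set.Icc Xmin Xmax, 0 < B_o x)
    (hBo_anti : AntitoneOn B_o (Set.Icc Xmin Xmax))
    (C : ℝ → ℝ) (D : ℝ → ℝ)
    (hC : ∀ x, C x = (1 - Real.exp (-(lam_u * x))) / (lam_u * x))
    (hD : ∀ x, D x = (lam_u * x + Real.exp (-(lam_u * x)) - 1) / (lam_u * x) ^ 2)
    (hyp : B_f * C Xmin / (B_o Xmax * D Xmin) ≤ M / K) :
    ∀ x ∈ Set.Icc Xmin Xmax, B_f * C x / (B_o x * D x) ≤ M / K := by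
  have hCD : ∀ y : ℝ, 0 < y → C y / D y = Rfun (lam_u * y) := by
    intro y hy
    have ht : 0 < lam_u * y := mul_pos hlu hy
    have hF := F_pos ht
    rw [hC, hD, Rfun]
    have h1 : lam_u * y ≠ 0 := ht.ne'
    have h2 : lam_u * y + exp (-(lam_u * y)) - 1 ≠ 0 := hF.ne'
    field_simp
  have hDpos : ∀ y : ℝ, 0 < y → 0 < D y := by
    intro y hy
    have ht : 0 < lam_u * y := mul_pos hlu hy
    rw [hD]; exact div_pos (F_pos ht) (by positivity)
  have hCpos : ∀ y : ℝ, 0 < y → 0 < C y := by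
    intro y hy
    have ht : 0 < lam_u * y := mul_pos hlu hy
    rw [hC]; exact div_pos (by have := E_lt_one ht; linarith) ht
  intro x hx
  obtain ⟨hx1, hx2⟩ := hx
  have hx0 : 0 < x := lt_of_lt_of_le hXmin hx1
  have hXmax0 : 0 < Xmax := lt_of_lt_of_le hXmin hXle
  have hRle : Rfun (lam_u * x) ≤ Rfun (lam_u * Xmin) :=
    R_anti (Set.mem_Ioi.mpr (mul_pos hlu hXmin)) (Set.mem_Ioi.mpr (mul_pos hlu hx0))
      (mul_le_mul_of_nonneg_left hx1 hlu.le)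
  have hratio : C x / D x ≤ C Xmin / D Xmin := by
    rw [hCD x hx0, hCD Xmin hXmin]; exact hRle
  have hBox : 0 < B_o x := hBo_pos x ⟨hx1, hx2⟩
  have hBoM : 0 < B_o Xmax := hBo_pos Xmax ⟨hXle, le_refl _⟩
  have hBo : B_o Xmax ≤ B_o x := hBo_anti ⟨hx1, hx2⟩ ⟨hXle, le_refl _⟩ hx2
  have heq : ∀ a c b d : ℝ, a * c / (b * d) = a * (c / d) / b := by
    intros a c b d
    simp [div_eq_mul_inv, mul_inv]; ring
  calc B_f * C x / (B_o x * D x)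
      = B_f * (C x / D x) / B_o x := heq _ _ _ _
    _ ≤ B_f * (C Xmin / D Xmin) / B_o Xmax := by
        apply div_le_div₀ (mul_nonneg hBf.le
          (div_nonneg (hCpos Xmin hXmin).le (hDpos Xmin hXmin).le)) _ hBoM hBo
        exact mul_le_mul_of_nonneg_left hratio hBf.le
    _ = B_f * C Xmin / (B_o Xmax * D Xmin) := (heq _ _ _ _).symm
    _ ≤ M / K := hyp
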